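/- Let 𝒯 be a finite set of templates and fix a finite proposition set AP. For finite pointed labelled graphs (G,v) and (G',v') over AP, there exists a bounded 𝒯-GNN 𝒩 with Boolean classification satisfying 𝒩(G,v) ≠ 𝒩(G',v') if and only if there exists l ∈ ℕ such that (G,v) and (G',v') are not graded l-𝒯-bisimilar. -/

import Mathlib

set_option maxHeartbeats 1000000

attribute [local instance 10] Classical.propDecidable

/-- A template `T = (V, E⁺, E⁻, r)`: vertex set `Fin (n+1)` (cardinality `n+1`),
root `0`, edges `pos`, non-edges `neg`, with `pos ∩ neg = ∅`. -/
structure Template where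
  n : ℕ
  pos : Finset (Fin (n + 1) × Fin (n + 1))
  neg : Finset (Fin (n + 1) × Fin (n + 1))
  disj : ∀ p, ¬(p ∈ pos ∧ p ∈ neg)

/-- A labelled directed graph with labels in `Λ`: a finite vertex set (a finite
subset of `ℕ`), an edge relation `E ⊆ V × V`, and a labelling of the nodes. -/
structure LGraph (Λ : Type) where
  verts : Finset ℕ
  edge : ℕ → ℕ → Prop
  lab : ℕ → Λ
  edge_mem : ∀ u w, edge u w → u ∈ verts ∧ w ∈ verts

/-- `f` is a template embedding of `T` into the pointed graph `(G, w)`: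
an injective map sending the root to `w`, `E⁺`-pairs to edges and `E⁻`-pairs to
non-edges. -/
def IsEmb {Λ : Type} (T : Template) (G : LGraph Λ) (w : ℕ) (f : Fin (T.n + 1) → ℕ) : Prop :=
  Function.Injective f ∧ f 0 = w ∧ (∀ i, f i ∈ G.verts) ∧
    (∀ p ∈ T.pos, G.edge (f p.1) (f p.2)) ∧ (∀ p ∈ T.neg, ¬ G.edge (f p.1) (f p.2))

/-- The (finite) set `emb(T,(G,w))` of template embeddings of `T` into `(G, w)`. -/
noncomputable def embFinset {Λ : Type} (T : Template) (G : LGraph Λ) (w : ℕ) :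
    Finset (Fin (T.n + 1) → ℕ) :=
  (Fintype.piFinset fun _ : Fin (T.n + 1) => G.verts).filter (IsEmb T G w)

/-- Forth condition: any `k` pairwise distinct template embeddings of `T` at `(G,v)`
can be matched by `k` pairwise distinct embeddings at `(G',v')`, pointwise related
by `Z`. -/
def Forth {Λ : Type} (Z : ℕ → ℕ → Prop) (T : Template) (G G' : LGraph Λ)
    (v v' : ℕ) (k : ℕ) : Prop :=
  ∀ F : Fin k → (Fin (T.n + 1) → ℕ), Function.Injective F → (∀ i, IsEmb T G v (F i)) →
    ∃ F' : Fin k → (Fin (T.n + 1) → ℕ), Function.Injective F' ∧ (∀ i, IsEmb T G' v' (F' i)) ∧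
      ∀ i u, Z (F i u) (F' i u)

/-- `Z` is a graded `l`-`𝒯`-bisimulation between `G` and `G'`, where the allowed
multiplicities `k` in the back-and-forth conditions are those satisfying `P`. -/
def IsBisimP {Λ : Type} (𝒯 : Finset Template) (P : ℕ → Prop) (G G' : LGraph Λ) :
    ℕ → (ℕ → ℕ → Prop) → Prop
  | 0, Z => ∀ v v', Z v v' → G.lab v = G'.lab v'
  | l + 1, Z => ∃ Z', IsBisimP 𝒯 P G G' l Z' ∧
      ∀ v v', Z v v' → Z' v v' ∧ ∀ T ∈ 𝒯, ∀ k, P k →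
        Forth Z' T G G' v v' k ∧ Forth (fun a b => Z' b a) T G' G v' v k

/-- `(G,v)` and `(G',v')` are graded `l`-`𝒯`-bisimilar. -/
def GBisimilar {Λ : Type} (𝒯 : Finset Template) (l : ℕ) (G : LGraph Λ) (v : ℕ)
    (G' : LGraph Λ) (v' : ℕ) : Prop :=
  ∃ Z, IsBisimP 𝒯 (fun k => 1 ≤ k) G G' l Z ∧ Z v v'

/-- `(G,v)` and `(G',v')` are `l`-`c`-`𝒯`-bisimilar (multiplicities restricted to `k ≤ c`). -/
def BBisimilar {Λ : Type} (𝒯 : Finset Template) (l c : ℕ) (G : LGraph Λ) (v : ℕ)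
    (G' : LGraph Λ) (v' : ℕ) : Prop :=
  ∃ Z, IsBisimP 𝒯 (fun k => 1 ≤ k ∧ k ≤ c) G G' l Z ∧ Z v v'

/-- `A↾c`: cap all multiplicities of a multiset at `c`. -/
noncomputable def mcap {α : Type} (c : ℕ) (m : Multiset α) : Multiset α :=
  m.toFinset.val.bind fun a => Multiset.replicate (min c (m.count a)) a

/-- The `𝒯`-WL colouring of `G` after `l` rounds, using `hash0` for the initial
colouring and `hash` for the refinement rounds; at each round the new colour of `v`
hashes its previous colour together with, for each template `T ∈ 𝒯`, the multiset of
`T`-labelled colourings induced by the template embeddings at `v`. -/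
noncomputable def colWL {Λ C : Type} (𝒯 : Finset Template) (hash0 : Λ → C)
    (hash : C → ((T : {x // x ∈ 𝒯}) → Multiset (Fin (T.1.n + 1) → C)) → C)
    (G : LGraph Λ) : ℕ → ℕ → C
  | 0, v => hash0 (G.lab v)
  | l + 1, v =>
      hash (colWL 𝒯 hash0 hash G l v)
        (fun T => (embFinset T.1 G v).val.map
          (fun f => fun u => colWL 𝒯 hash0 hash G l (f u)))

/-- A multiset function is `c`-bounded if its value is unchanged when all
multiplicities larger than `c` are replaced by `c`. -/
def CBoundedFun {α β : Type} (c : ℕ) (g : Multiset α → β) : Prop :=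
  ∀ m, g m = g (mcap c m)

/-- An `nAr`-ary `L`-layer `𝒯`-GNN with feature dimension `d`: templates from `𝒯`,
template-aggregation functions (invariant under root-fixing label-preserving template
automorphisms), outer multiset aggregation functions, combination functions, and a
Boolean classification function. -/
structure TGNN (𝒯 : Finset Template) (d nAr L : ℕ) where
  temp : Fin L → Fin nAr → Template
  temp_mem : ∀ l j, temp l j ∈ 𝒯
  aggT : (l : Fin L) → (j : Fin nAr) → ((Fin ((temp l j).n + 1) → (Fin d → ℝ)) → (Fin d → ℝ))
  aggT_inv : ∀ (l : Fin L) (j : Fin nAr) (σ : Equiv.Perm (Fin ((temp l j).n + 1)))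
      (lab₁ lab₂ : Fin ((temp l j).n + 1) → (Fin d → ℝ)),
      σ 0 = 0 →
      (∀ p : Fin ((temp l j).n + 1) × Fin ((temp l j).n + 1),
        p ∈ (temp l j).pos ↔ (σ p.1, σ p.2) ∈ (temp l j).pos) →
      (∀ p : Fin ((temp l j).n + 1) × Fin ((temp l j).n + 1),
        p ∈ (temp l j).neg ↔ (σ p.1, σ p.2) ∈ (temp l j).neg) →
      (∀ u, u ≠ 0 → lab₁ u = lab₂ (σ u)) →
      aggT l j lab₁ = aggT l j lab₂
  agg : Fin L → Fin nAr → Multiset (Fin d → ℝ) → (Fin d → ℝ)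
  comb : Fin L → (Fin d → ℝ) → (Fin nAr → (Fin d → ℝ)) → (Fin d → ℝ)
  cls : (Fin d → ℝ) → Bool

/-- The feature vector `λ^l(v)` of node `v` after `l` layers of the `𝒯`-GNN `N` on
input graph `G`. -/
noncomputable def TGNN.feat {𝒯 : Finset Template} {d nAr L : ℕ} (N : TGNN 𝒯 d nAr L)
    (G : LGraph (Fin d → ℝ)) : ℕ → ℕ → (Fin d → ℝ)
  | 0, v => G.lab v
  | l + 1, v =>
      if h : l < L then
        N.comb ⟨l, h⟩ (N.feat G l v)
          (fun j => N.agg ⟨l, h⟩ j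
            ((embFinset (N.temp ⟨l, h⟩ j) G v).val.map
              (fun f => N.aggT ⟨l, h⟩ j (fun u => N.feat G l (f u)))))
      else fun _ => 0

/-- A `𝒯`-GNN is `c`-bounded if all its outer aggregation functions are `c`-bounded. -/
def TGNN.IsCBounded {𝒯 : Finset Template} {d nAr L : ℕ} (N : TGNN 𝒯 d nAr L) (c : ℕ) : Prop :=
  ∀ l j, CBoundedFun c (N.agg l j)

def boolToReal (b : Bool) : ℝ := if b then 1 else 0

/-- Identify a `{0,1}^d`-labelled graph with a real-vector labelled graph. -/
def LGraph.toReal {d : ℕ} (G : LGraph (Fin d → Bool)) : LGraph (Fin d → ℝ) :=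
  ⟨G.verts, G.edge, fun v i => boolToReal (G.lab v i), G.edge_mem⟩

/-- Initialize real feature vectors of dimension `d'` from `{0,1}^a`-labels
(the first `a` coordinates hold the truth values of the propositions, the rest are `0`). -/
def initG {a : ℕ} (d' : ℕ) (G : LGraph (Fin a → Bool)) : LGraph (Fin d' → ℝ) :=
  ⟨G.verts, G.edge, fun v i => if h : (i : ℕ) < a then boolToReal (G.lab v ⟨i, h⟩) else 0,
    G.edge_mem⟩

/-- Formulae of graded template modal logic `GML(𝒯)` over propositions `AP`
(`⊤` included; a modality `⟨T⟩^{≥j}(φ₁,…,φ_{n_T})` takes `n_T = |V_T| - 1` arguments). -/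
inductive GML (AP : Type) : Type
  | top : GML AP
  | prop : AP → GML AP
  | neg : GML AP → GML AP
  | and : GML AP → GML AP → GML AP
  | dia : (T : Template) → ℕ → (Fin T.n → GML AP) → GML AP

/-- Semantics of `GML(𝒯)` on pointed labelled graphs:
`(G,v) ⊨ ⟨T⟩^{≥j}(φ⃗)` iff at least `j` embeddings `f ∈ emb(T,(G,v))` satisfy
`(G, f(i)) ⊨ φᵢ` for all `1 ≤ i ≤ n_T`. -/
def Sat {AP : Type} (G : LGraph (AP → Bool)) : GML AP → ℕ → Prop
  | .top, _ => True
  | .prop p, v => G.lab v p = true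
  | .neg φ, v => ¬ Sat G φ v
  | .and φ ψ, v => Sat G φ v ∧ Sat G ψ v
  | .dia T j φs, v =>
      j ≤ ((embFinset T G v).filter
        (fun f => ∀ i : Fin T.n, Sat G (φs i) (f i.succ))).card

/-- Modal depth. -/
def GML.md {AP : Type} : GML AP → ℕ
  | .top => 0
  | .prop _ => 0
  | .neg φ => φ.md
  | .and φ ψ => max φ.md ψ.md
  | .dia _ _ φs => 1 + Finset.univ.sup fun i => (φs i).md

/-- Counting bound: the least `c` such that every modality `⟨T⟩^{≥j}` occurring in the
formula has `j ≤ c`. -/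
def GML.cb {AP : Type} : GML AP → ℕ
  | .top => 0
  | .prop _ => 0
  | .neg φ => φ.cb
  | .and φ ψ => max φ.cb ψ.cb
  | .dia _ j φs => max j (Finset.univ.sup fun i => (φs i).cb)

/-- Syntactic depth: counts both Boolean connectives and modalities along the deepest
branch of the syntax tree. -/
def GML.sd {AP : Type} : GML AP → ℕ
  | .top => 0
  | .prop _ => 0
  | .neg φ => 1 + φ.sd
  | .and φ ψ => 1 + max φ.sd ψ.sd
  | .dia _ _ φs => 1 + Finset.univ.sup fun i => (φs i).sd

/-- Well-formedness of a `GML(𝒯)` formula: all templates come from `𝒯` and all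
grades satisfy `j ≥ 1`. -/
def GML.Wf {AP : Type} (𝒯 : Finset Template) : GML AP → Prop
  | .top => True
  | .prop _ => True
  | .neg φ => φ.Wf 𝒯
  | .and φ ψ => φ.Wf 𝒯 ∧ ψ.Wf 𝒯
  | .dia T j φs => T ∈ 𝒯 ∧ 1 ≤ j ∧ ∀ i, (φs i).Wf 𝒯

/-- Finite conjunction (`⊤` for the empty list). -/
def bigConj {AP : Type} : List (GML AP) → GML AP
  | [] => .top
  | φ :: rest => .and φ (bigConj rest)

/-- `|S^{(G,v)}_{T,φ⃗}|`: the number of embeddings `f ∈ emb(T,(G,v))` with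
`(G, f(i)) ⊨ φᵢ` for all `1 ≤ i ≤ n_T`. -/
noncomputable def Scard {AP : Type} (G : LGraph (AP → Bool)) (T : Template) (v : ℕ)
    (φs : Fin T.n → GML AP) : ℕ :=
  ((embFinset T G v).filter (fun f => ∀ i : Fin T.n, Sat G (φs i) (f i.succ))).card

/-- The `l`-characteristic formula `χ^l_{(G,v)}`. -/
noncomputable def charU {AP : Type} [Fintype AP] (𝒯 : Finset Template) :
    ℕ → LGraph (AP → Bool) → ℕ → GML AP
  | 0 => fun G v =>
      bigConj ((Finset.univ : Finset AP).toList.map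
        (fun p => if G.lab v p then GML.prop p else GML.neg (GML.prop p)))
  | l + 1 => fun G v =>
      GML.and (charU 𝒯 l G v)
        (bigConj (𝒯.toList.map (fun T =>
          GML.and
            (bigConj ((embFinset T G v).toList.map (fun f =>
              GML.dia T (Scard G T v (fun i => charU 𝒯 l G (f i.succ)))
                (fun i => charU 𝒯 l G (f i.succ)))))
            (GML.neg (GML.dia T (Scard G T v (fun _ => GML.top) + 1)
              (fun _ => GML.top))))))

/-- `reps m` is a system of representatives for the `m`-`c`-`𝒯`-bisimilarity classes of
finite pointed labelled graphs: every representative is a genuine pointed graph, every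
pointed graph is `m`-`c`-`𝒯`-bisimilar to some representative, and distinct
representatives are non-bisimilar. -/
def RepSystem {AP : Type} (𝒯 : Finset Template) (c : ℕ)
    (reps : ℕ → Finset (LGraph (AP → Bool) × ℕ)) : Prop :=
  ∀ m : ℕ,
    (∀ q ∈ reps m, q.2 ∈ q.1.verts) ∧
    (∀ (G : LGraph (AP → Bool)) (v : ℕ), v ∈ G.verts →
      ∃ q ∈ reps m, BBisimilar 𝒯 m c q.1 q.2 G v) ∧
    (∀ q ∈ reps m, ∀ q' ∈ reps m, BBisimilar 𝒯 m c q.1 q.2 q'.1 q'.2 → q = q')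

/-- The bounded `l`-`c`-characteristic formula `χ^{l,c}_{(G,v)}`, relative to a chosen
system `reps` of representatives of the bounded bisimilarity classes. -/
noncomputable def charB {AP : Type} [Fintype AP] (𝒯 : Finset Template) (c : ℕ)
    (reps : ℕ → Finset (LGraph (AP → Bool) × ℕ)) :
    ℕ → LGraph (AP → Bool) → ℕ → GML AP
  | 0 => fun G v =>
      bigConj ((Finset.univ : Finset AP).toList.map
        (fun p => if G.lab v p then GML.prop p else GML.neg (GML.prop p)))
  | l + 1 => fun G v =>
      GML.and (charB 𝒯 c reps l G v)
        (bigConj (𝒯.toList.map (fun T =>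
          GML.and
            (bigConj ((embFinset T G v).toList.map (fun f =>
              GML.dia T (min c (Scard G T v (fun i => charB 𝒯 c reps l G (f i.succ))))
                (fun i => charB 𝒯 c reps l G (f i.succ)))))
            (bigConj (((Fintype.piFinset (fun _ : Fin T.n => reps l)).filter
                (fun t => Scard G T v
                  (fun i => charB 𝒯 c reps l (t i).1 (t i).2) + 1 ≤ c)).toList.map
              (fun t => GML.neg (GML.dia T
                  (Scard G T v (fun i => charB 𝒯 c reps l (t i).1 (t i).2) + 1)
                  (fun i => charB 𝒯 c reps l (t i).1 (t i).2))))))))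

/-- Standard graded forth condition on out-neighbours. -/
def StdForth {Λ : Type} (Z : ℕ → ℕ → Prop) (G G' : LGraph Λ) (v v' : ℕ) (k : ℕ) : Prop :=
  ∀ us : Fin k → ℕ, Function.Injective us → (∀ i, G.edge v (us i)) →
    ∃ us' : Fin k → ℕ, Function.Injective us' ∧ (∀ i, G'.edge v' (us' i)) ∧
      ∀ i, Z (us i) (us' i)

/-- `Z` is a standard graded `l`-bisimulation (the relation underlying standard 1-WL
colour refinement). -/
def IsStdBisim {Λ : Type} (G G' : LGraph Λ) : ℕ → (ℕ → ℕ → Prop) → Prop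
  | 0, Z => ∀ v v', Z v v' → G.lab v = G'.lab v'
  | l + 1, Z => ∃ Z', IsStdBisim G G' l Z' ∧
      ∀ v v', Z v v' → Z' v v' ∧ ∀ k, 1 ≤ k →
        StdForth Z' G G' v v' k ∧ StdForth (fun a b => Z' b a) G' G v' v k

/-- `(G,v)` and `(G',v')` are standard graded `l`-bisimilar. -/
def StdBisimilar {Λ : Type} (l : ℕ) (G : LGraph Λ) (v : ℕ) (G' : LGraph Λ) (v' : ℕ) : Prop :=
  ∃ Z, IsStdBisim G G' l Z ∧ Z v v'

/-- The edge template `T₁ = ({r,a}, E⁺ = {(r,a)}, E⁻ = ∅, r)`. -/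
def T1 : Template := ⟨1, {(0, 1)}, ∅, by decide⟩

/-- The triangle template `T△ = ({r,a,b}, E⁺ = {(r,a),(a,b),(b,r)}, E⁻ = ∅, r)`. -/
def Ttri : Template := ⟨2, {(0, 1), (1, 2), (2, 0)}, ∅, by decide⟩

/-- The directed 3-cycle, all nodes with the same constant label. -/
def G3 : LGraph Unit where
  verts := {0, 1, 2}
  edge u w := (u = 0 ∧ w = 1) ∨ (u = 1 ∧ w = 2) ∨ (u = 2 ∧ w = 0)
  lab _ := ()
  edge_mem := by rintro u w (⟨rfl, rfl⟩ | ⟨rfl, rfl⟩ | ⟨rfl, rfl⟩) <;> simp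

/-- The directed 6-cycle, all nodes with the same constant label. -/
def G6 : LGraph Unit where
  verts := Finset.range 6
  edge u w := u < 6 ∧ w = (u + 1) % 6
  lab _ := ()
  edge_mem := by
    rintro u w ⟨hu, rfl⟩
    simp only [Finset.mem_range]
    omega
attribute [local instance 10] Classical.propDecidable

open Cardinal in
lemma mk_fin_real_le (m : ℕ) : #(Fin m → ℝ) ≤ 𝔠 := by
  rw [← power_def, mk_real, mk_fin, power_natCast]
  rcases Nat.eq_zero_or_pos m with h | h
  · subst h; simp
    exact one_le_aleph0.trans aleph0_le_continuum
  · exact (power_nat_eq aleph0_le_continuum h).le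

open Cardinal in
lemma mk_fin_real (m : ℕ) (hm : 1 ≤ m) : #(Fin m → ℝ) = 𝔠 := by
  rw [← power_def, mk_real, mk_fin, power_natCast]
  exact power_nat_eq aleph0_le_continuum hm

open Cardinal in
lemma exists_emb_real {X : Type} (hX : #X ≤ 𝔠) (d : ℕ) (hd : 1 ≤ d) :
    Nonempty (X ↪ (Fin d → ℝ)) := by
  rw [← le_def]
  exact hX.trans_eq (mk_fin_real d hd).symm

open Cardinal in
lemma mk_multiset_le {X : Type} (hX : #X ≤ 𝔠) : #(Multiset X) ≤ 𝔠 := by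
  have h1 : #(Multiset X) ≤ #(List X) :=
    mk_le_of_surjective (f := fun l : List X => (l : Multiset X))
      (fun m => Quot.inductionOn m fun l => ⟨l, rfl⟩)
  refine h1.trans ?_
  cases isEmpty_or_nonempty X
  · have : Subsingleton (List X) := by
      constructor; intro a b
      match a, b with
      | [], [] => rfl
      | x :: _, _ => exact (IsEmpty.false x).elim
      | [], x :: _ => exact ((IsEmpty.false x).elim)
    exact (le_one_iff_subsingleton.mpr this).trans (one_le_aleph0.trans aleph0_le_continuum)
  · rw [mk_list_eq_max_mk_aleph0]
    exact max_le hX aleph0_le_continuum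

open Cardinal in
lemma mk_fun_fin_real_le (k d : ℕ) : #(Fin k → Fin d → ℝ) ≤ 𝔠 := by
  have e : (Fin k → Fin d → ℝ) ≃ (Fin (k * d) → ℝ) :=
    ((Equiv.curry _ _ _).symm).trans (Equiv.arrowCongr finProdFinEquiv (Equiv.refl _))
  rw [mk_congr e]
  exact mk_fin_real_le _

/-- embedding for multisets of `k`-tuples of feature vectors -/
lemma exists_emb_mt (k d : ℕ) (hd : 1 ≤ d) :
    Nonempty (Multiset (Fin k → Fin d → ℝ) ↪ (Fin d → ℝ)) :=
  exists_emb_real (mk_multiset_le (mk_fun_fin_real_le k d)) d hd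

open Cardinal in
/-- embedding for pairs (combination function) -/
lemma exists_emb_pair (nAr d : ℕ) (hd : 1 ≤ d) :
    Nonempty (((Fin d → ℝ) × (Fin nAr → Fin d → ℝ)) ↪ (Fin d → ℝ)) := by
  apply exists_emb_real _ d hd
  rw [mk_prod, lift_id, lift_id]
  calc #(Fin d → ℝ) * #(Fin nAr → Fin d → ℝ) ≤ 𝔠 * 𝔠 :=
        mul_le_mul' (mk_fin_real_le d) (mk_fun_fin_real_le nAr d)
    _ = 𝔠 := mul_eq_self aleph0_le_continuum
noncomputable section
/-- count in a capped multiset -/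
lemma count_mcap {α : Type} (c : ℕ) (m : Multiset α) (b : α) :
    (mcap c m).count b = min c (m.count b) := by
  classical
  unfold mcap
  rw [Multiset.count_bind]
  by_cases hb : b ∈ m.toFinset
  · have : (Multiset.map (fun a => (Multiset.replicate (min c (m.count a)) a).count b) m.toFinset.val).sum
        = ∑ a ∈ m.toFinset, if a = b then min c (m.count a) else 0 := by
      rw [Finset.sum]
      congr 1
      apply Multiset.map_congr rfl
      intro a _
      rw [Multiset.count_replicate]
    rw [this, Finset.sum_ite_eq' m.toFinset b (fun a => min c (m.count a)), if_pos hb]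
  · have hb' : m.count b = 0 := by
      rwa [Multiset.mem_toFinset, ← Multiset.count_pos, Nat.pos_iff_ne_zero, not_ne_iff] at hb
    rw [hb']
    simp only [Nat.min_zero]
    have : (Multiset.map (fun a => (Multiset.replicate (min c (m.count a)) a).count b) m.toFinset.val).sum
        = ∑ a ∈ m.toFinset, if a = b then min c (m.count a) else 0 := by
      rw [Finset.sum]
      congr 1
      apply Multiset.map_congr rfl
      intro a _
      rw [Multiset.count_replicate]
    rw [this, Finset.sum_ite_eq' m.toFinset b (fun a => min c (m.count a)), if_neg hb]

lemma mcap_idem {α : Type} (c : ℕ) (m : Multiset α) : mcap c (mcap c m) = mcap c m := by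
  classical
  ext b
  rw [count_mcap, count_mcap, ← min_assoc, min_self]

lemma mcap_eq_of_card_le {α : Type} {c : ℕ} {m₁ m₂ : Multiset α}
    (h : mcap c m₁ = mcap c m₂) (h₁ : Multiset.card m₁ ≤ c) (h₂ : Multiset.card m₂ ≤ c) :
    m₁ = m₂ := by
  ext b
  have hc := congrArg (Multiset.count b) h
  rw [count_mcap, count_mcap] at hc
  rwa [min_eq_right (le_trans (Multiset.count_le_card b m₁) h₁),
    min_eq_right (le_trans (Multiset.count_le_card b m₂) h₂)] at hc

lemma mcap_bounded {α : Type} (c : ℕ) : CBoundedFun c (fun m : Multiset α => mcap c m) := by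
  intro m; exact (mcap_idem c m).symm
end
/-! ### Root-fixing template automorphisms -/

noncomputable section

/-- zero out the root coordinate of a template labelling -/
def patz {d n : ℕ} (g : Fin (n+1) → Fin d → ℝ) : Fin (n+1) → Fin d → ℝ :=
  fun u => if u = 0 then (fun _ => 0) else g u

/-- the root-fixing automorphisms of a template -/
def AutT (T : Template) : Finset (Equiv.Perm (Fin (T.n+1))) :=
  Finset.univ.filter (fun σ => σ 0 = 0 ∧
    (∀ p : Fin (T.n+1) × Fin (T.n+1), p ∈ T.pos ↔ (σ p.1, σ p.2) ∈ T.pos) ∧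
    (∀ p : Fin (T.n+1) × Fin (T.n+1), p ∈ T.neg ↔ (σ p.1, σ p.2) ∈ T.neg))

lemma mem_AutT {T : Template} {σ : Equiv.Perm (Fin (T.n+1))} :
    σ ∈ AutT T ↔ σ 0 = 0 ∧
    (∀ p : Fin (T.n+1) × Fin (T.n+1), p ∈ T.pos ↔ (σ p.1, σ p.2) ∈ T.pos) ∧
    (∀ p : Fin (T.n+1) × Fin (T.n+1), p ∈ T.neg ↔ (σ p.1, σ p.2) ∈ T.neg) := by
  unfold AutT; rw [Finset.mem_filter]; simp

lemma one_mem_AutT (T : Template) : 1 ∈ AutT T := by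
  rw [mem_AutT]
  exact ⟨rfl, fun p => Iff.rfl, fun p => Iff.rfl⟩

lemma mul_mem_AutT {T : Template} {σ τ : Equiv.Perm (Fin (T.n+1))}
    (hσ : σ ∈ AutT T) (hτ : τ ∈ AutT T) : σ * τ ∈ AutT T := by
  rw [mem_AutT] at *
  obtain ⟨h1, h2, h3⟩ := hσ
  obtain ⟨g1, g2, g3⟩ := hτ
  refine ⟨?_, fun p => ?_, fun p => ?_⟩
  · show σ (τ 0) = 0; rw [g1, h1]
  · exact (g2 p).trans (h2 (τ p.1, τ p.2))
  · exact (g3 p).trans (h3 (τ p.1, τ p.2))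

lemma AutT_val_map_mul {T : Template} {σ : Equiv.Perm (Fin (T.n+1))} (hσ : σ ∈ AutT T) :
    (AutT T).val.map (fun τ => σ * τ) = (AutT T).val := by
  have hinj : Function.Injective (fun τ : Equiv.Perm (Fin (T.n+1)) => σ * τ) :=
    fun a b h => by simpa using mul_left_cancel h
  have hnodup : ((AutT T).val.map (fun τ => σ * τ)).Nodup :=
    (AutT T).nodup.map hinj
  apply Multiset.eq_of_le_of_card_le
  · rw [Multiset.le_iff_subset hnodup]
    intro x hx
    rw [Multiset.mem_map] at hx
    obtain ⟨τ, hτ, rfl⟩ := hx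
    exact mul_mem_AutT hσ hτ
  · rw [Multiset.card_map]

/-- the orbit-of-labelling invariant used as template aggregation -/
def NTmul {d : ℕ} (T : Template) (lab : Fin (T.n+1) → Fin d → ℝ) :
    Multiset (Fin (T.n+1) → Fin d → ℝ) :=
  (AutT T).val.map (fun σ => patz (fun u => lab (σ u)))

lemma NTmul_inv {d : ℕ} {T : Template} {σ : Equiv.Perm (Fin (T.n+1))}
    (hσ : σ ∈ AutT T) (lab₁ lab₂ : Fin (T.n+1) → Fin d → ℝ)
    (h : ∀ u, u ≠ 0 → lab₁ u = lab₂ (σ u)) : NTmul T lab₁ = NTmul T lab₂ := by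
  unfold NTmul
  have step : ∀ τ ∈ (AutT T).val, patz (fun u => lab₁ (τ u)) = (fun ρ : Equiv.Perm (Fin (T.n+1)) => patz (fun u => lab₂ (ρ u))) (σ * τ) := by
    intro τ hτ
    have hτ0 : τ 0 = 0 := (mem_AutT.mp hτ).1
    funext u
    show patz (fun u => lab₁ (τ u)) u = patz (fun u => lab₂ ((σ * τ) u)) u
    unfold patz
    by_cases hu : u = 0
    · rw [if_pos hu, if_pos hu]
    · rw [if_neg hu, if_neg hu]
      show lab₁ (τ u) = lab₂ (σ (τ u))
      apply h
      intro h0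
      exact hu (τ.injective (h0.trans hτ0.symm))
  rw [Multiset.map_congr rfl step]
  have hmm : Multiset.map (fun x => (fun ρ : Equiv.Perm (Fin (T.n+1)) => patz (fun u => lab₂ (ρ u))) (σ * x)) (AutT T).val
       = Multiset.map (fun ρ : Equiv.Perm (Fin (T.n+1)) => patz (fun u => lab₂ (ρ u))) ((AutT T).val.map (fun τ => σ * τ)) := by
    rw [Multiset.map_map]; rfl
  rw [hmm, AutT_val_map_mul hσ]

end
/-! ### Embedding set lemmas -/

lemma mem_embFinset {Λ : Type} {T : Template} {H : LGraph Λ} {w : ℕ}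
    {f : Fin (T.n + 1) → ℕ} : f ∈ embFinset T H w ↔ IsEmb T H w f := by
  unfold embFinset
  rw [Finset.mem_filter, Fintype.mem_piFinset]
  exact ⟨fun h => h.2, fun h => ⟨h.2.2.1, h⟩⟩

lemma embFinset_eq_empty {Λ : Type} {T : Template} {H : LGraph Λ} {w : ℕ}
    (hw : w ∉ H.verts) : embFinset T H w = ∅ := by
  rw [Finset.eq_empty_iff_forall_notMem]
  intro f hf
  rw [mem_embFinset] at hf
  exact hw (hf.2.1 ▸ hf.2.2.1 0)

lemma isEmb_comp {Λ : Type} {T : Template} {H : LGraph Λ} {w : ℕ}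
    {f : Fin (T.n + 1) → ℕ} {σ : Equiv.Perm (Fin (T.n+1))}
    (hf : IsEmb T H w f) (hσ : σ ∈ AutT T) : IsEmb T H w (fun u => f (σ u)) := by
  obtain ⟨hinj, hroot, hmem, hpos, hneg⟩ := hf
  obtain ⟨h0, hp, hn⟩ := mem_AutT.mp hσ
  refine ⟨fun a b hab => σ.injective (hinj hab), by simp [h0, hroot], fun i => hmem _,
    fun p hp' => hpos _ ((hp p).mp hp'), fun p hn' => hneg _ ((hn p).mp hn')⟩

lemma embFinset_val_map_comp {Λ : Type} {T : Template} {H : LGraph Λ} {w : ℕ}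
    {σ : Equiv.Perm (Fin (T.n+1))} (hσ : σ ∈ AutT T) :
    (embFinset T H w).val.map (fun f u => f (σ u)) = (embFinset T H w).val := by
  have hinj : Function.Injective (fun (f : Fin (T.n+1) → ℕ) u => f (σ u)) := by
    intro a b hab
    funext x
    have := congrFun hab (σ.symm x)
    simpa using this
  have hnodup : ((embFinset T H w).val.map (fun f u => f (σ u))).Nodup :=
    (embFinset T H w).nodup.map hinj
  apply Multiset.eq_of_le_of_card_le
  · rw [Multiset.le_iff_subset hnodup]
    intro x hx
    rw [Multiset.mem_map] at hx
    obtain ⟨f, hf, rfl⟩ := hx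
    exact mem_embFinset.mpr (isEmb_comp (mem_embFinset.mp hf) hσ)
  · rw [Multiset.card_map]
/-! ### The key counting identity -/

lemma bind_const_aux {α β : Type} (s : Multiset α) (m : Multiset β) :
    s.bind (fun _ => m) = (Multiset.card s) • m :=
  Multiset.induction_on s (by simp) (fun a s ih => by
    rw [Multiset.cons_bind, ih, Multiset.card_cons, succ_nsmul'])

lemma bind_NTmul {Λ : Type} {d : ℕ} (T : Template) (H : LGraph Λ) (w : ℕ)
    (χ : ℕ → Fin d → ℝ) :
    (embFinset T H w).val.bind (fun f => NTmul T (fun u => χ (f u)))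
      = (AutT T).card • ((embFinset T H w).val.map (fun f => patz (fun u => χ (f u)))) := by
  unfold NTmul
  have h1 : (embFinset T H w).val.bind
      (fun f => (AutT T).val.map (fun σ => patz (fun u => χ (f (σ u)))))
      = (AutT T).val.bind (fun σ => (embFinset T H w).val.map (fun f => patz (fun u => χ (f (σ u))))) := by
    have e1 : ∀ m : Multiset (Fin (T.n+1) → ℕ), ∀ n : Multiset (Equiv.Perm (Fin (T.n+1))),
        m.bind (fun f => n.map (fun σ => patz (fun u => χ (f (σ u)))))
        = m.bind (fun f => n.bind (fun σ => {patz (fun u => χ (f (σ u)))})) := by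
      intro m n
      congr 1
      funext f
      rw [Multiset.bind_singleton]
    rw [e1]
    rw [Multiset.bind_bind]
    congr 1
    funext σ
    rw [Multiset.bind_singleton]
  rw [h1]
  have h2 : ∀ σ ∈ (AutT T).val,
      (embFinset T H w).val.map (fun f => patz (fun u => χ (f (σ u))))
      = (embFinset T H w).val.map (fun f => patz (fun u => χ (f u))) := by
    intro σ hσ
    conv_rhs => rw [← embFinset_val_map_comp (H := H) (w := w) hσ]
    rw [Multiset.map_map]
    rfl
  rw [Multiset.bind_congr h2, bind_const_aux]
  rfl

lemma card_AutT_pos (T : Template) : 0 < (AutT T).card :=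
  Finset.card_pos.mpr ⟨1, one_mem_AutT T⟩
/-! ### Forth from pattern multiset equality -/

lemma embFinset_initG {a : ℕ} (d' : ℕ) (T : Template) (G : LGraph (Fin a → Bool)) (w : ℕ) :
    embFinset T (initG d' G) w = embFinset T G w := rfl

lemma forth_of_patterns {Λ : Type} {d : ℕ} (T : Template) (H H' : LGraph Λ)
    (χ χ' : ℕ → Fin d → ℝ) (Z : ℕ → ℕ → Prop) (w w' : ℕ) (k : ℕ)
    (hZ : ∀ x y, x ∈ H.verts → y ∈ H'.verts → χ x = χ' y → Z x y)
    (hroot : χ w = χ' w')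
    (hP : (embFinset T H w).val.map (fun f => patz (fun u => χ (f u)))
        = (embFinset T H' w').val.map (fun f => patz (fun u => χ' (f u)))) :
    Forth Z T H H' w w' k := by
  classical
  intro F hFinj hF
  set g : (Fin (T.n+1) → ℕ) → (Fin (T.n+1) → Fin d → ℝ) :=
    fun f => patz (fun u => χ (f u)) with hgdef
  set g' : (Fin (T.n+1) → ℕ) → (Fin (T.n+1) → Fin d → ℝ) :=
    fun f => patz (fun u => χ' (f u)) with hg'def
  have hmemb : ∀ i, F i ∈ embFinset T H w := fun i => mem_embFinset.mpr (hF i)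
  set S : (Fin (T.n+1) → Fin d → ℝ) → Finset (Fin (T.n+1) → ℕ) :=
    fun b => (embFinset T H w).filter (fun f => b = g f) with hSdef
  set S' : (Fin (T.n+1) → Fin d → ℝ) → Finset (Fin (T.n+1) → ℕ) :=
    fun b => (embFinset T H' w').filter (fun f => b = g' f) with hS'def
  have hcard : ∀ b, (S b).card = (S' b).card := by
    intro b
    have c1 : (S b).card = Multiset.count b ((embFinset T H w).val.map g) := by
      rw [Multiset.count_map]; rfl
    have c2 : (S' b).card = Multiset.count b ((embFinset T H' w').val.map g') := by
      rw [Multiset.count_map]; rfl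
    rw [c1, c2, hP]
  have e : ∀ b, {x // x ∈ S b} ≃ {x // x ∈ S' b} := fun b => Finset.equivOfCardEq (hcard b)
  have hFS : ∀ i, F i ∈ S (g (F i)) := fun i => Finset.mem_filter.mpr ⟨hmemb i, rfl⟩
  set F' : Fin k → (Fin (T.n + 1) → ℕ) := fun i => (e (g (F i)) ⟨F i, hFS i⟩).1 with hF'def
  have hF'S : ∀ i, F' i ∈ S' (g (F i)) := fun i => (e (g (F i)) ⟨F i, hFS i⟩).2
  have hF'emb : ∀ i, IsEmb T H' w' (F' i) :=
    fun i => mem_embFinset.mp (Finset.mem_filter.mp (hF'S i)).1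
  have hgg' : ∀ i, g (F i) = g' (F' i) := fun i => (Finset.mem_filter.mp (hF'S i)).2
  have key : ∀ b₁ b₂, b₁ = b₂ → ∀ (x₁ : {x // x ∈ S b₁}) (x₂ : {x // x ∈ S b₂}),
      (e b₁ x₁).1 = (e b₂ x₂).1 → x₁.1 = x₂.1 := by
    rintro b₁ b₂ rfl x₁ x₂ h
    exact congrArg Subtype.val ((e b₁).injective (Subtype.ext h))
  refine ⟨F', ?_, hF'emb, ?_⟩
  · intro i j hij
    have hb : g (F i) = g (F j) := by
      rw [hgg' i, hgg' j, hij]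
    exact hFinj (key _ _ hb ⟨F i, hFS i⟩ ⟨F j, hFS j⟩ hij)
  · intro i u
    by_cases hu : u = 0
    · subst hu
      have h1 : F i 0 = w := (hF i).2.1
      have h2 : F' i 0 = w' := (hF'emb i).2.1
      rw [h1, h2]
      exact hZ w w' (h1 ▸ (hF i).2.2.1 0) (h2 ▸ (hF'emb i).2.2.1 0) hroot
    · have := congrFun (hgg' i) u
      simp only [hgdef, hg'def, patz, if_neg hu] at this
      exact hZ _ _ ((hF i).2.2.1 u) ((hF'emb i).2.2.1 u) this
/-! ### GNN features are bisimulation invariant -/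

lemma map_le_of_forth {Λ : Type} {β : Type} (T : Template) (H H' : LGraph Λ)
    (Z : ℕ → ℕ → Prop) (w w' : ℕ) (g g' : (Fin (T.n+1) → ℕ) → β)
    (hforth : ∀ k, 1 ≤ k → Forth Z T H H' w w' k)
    (hg : ∀ f f', IsEmb T H w f → IsEmb T H' w' f' → (∀ u, Z (f u) (f' u)) → g f = g' f') :
    (embFinset T H w).val.map g ≤ (embFinset T H' w').val.map g' := by
  classical
  rcases Nat.eq_zero_or_pos (embFinset T H w).card with hk | hk
  · rw [Finset.card_eq_zero.mp hk]
    simp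
  · set k := (embFinset T H w).card with hkdef
    set F : Fin k → (Fin (T.n+1) → ℕ) := fun i => ((embFinset T H w).equivFin.symm i).1
      with hFdef
    have hFinj : Function.Injective F :=
      fun i j h => (embFinset T H w).equivFin.symm.injective (Subtype.ext h)
    have hFemb : ∀ i, IsEmb T H w (F i) :=
      fun i => mem_embFinset.mp ((embFinset T H w).equivFin.symm i).2
    obtain ⟨F', hF'inj, hF'emb, hrel⟩ := hforth k hk F hFinj hFemb
    have himg : Finset.image F Finset.univ = embFinset T H w := by
      apply Finset.eq_of_subset_of_card_le
      · intro x hx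
        rw [Finset.mem_image] at hx
        obtain ⟨i, _, rfl⟩ := hx
        exact ((embFinset T H w).equivFin.symm i).2
      · rw [Finset.card_image_of_injective _ hFinj, Finset.card_univ, Fintype.card_fin]
    have hval : (embFinset T H w).val = (Finset.univ : Finset (Fin k)).val.map F := by
      rw [← himg, Finset.image_val,
        Multiset.dedup_eq_self.mpr (Finset.univ.nodup.map hFinj)]
    rw [hval, Multiset.map_map]
    have heq : Multiset.map (g ∘ F) (Finset.univ : Finset (Fin k)).val
        = Multiset.map (g' ∘ F') (Finset.univ : Finset (Fin k)).val :=
      Multiset.map_congr rfl (fun i _ => hg _ _ (hFemb i) (hF'emb i) (hrel i))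
    rw [heq, ← Multiset.map_map]
    apply Multiset.map_le_map
    have hval' : (Finset.univ : Finset (Fin k)).val.map F' = (Finset.image F' Finset.univ).val := by
      rw [Finset.image_val, Multiset.dedup_eq_self.mpr (Finset.univ.nodup.map hF'inj)]
    rw [hval', Finset.val_le_iff]
    intro x hx
    rw [Finset.mem_image] at hx
    obtain ⟨i, _, rfl⟩ := hx
    exact mem_embFinset.mpr (hF'emb i)

lemma map_eq_of_forths {Λ : Type} {β : Type} (T : Template) (H H' : LGraph Λ)
    (Z : ℕ → ℕ → Prop) (w w' : ℕ) (g g' : (Fin (T.n+1) → ℕ) → β)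
    (hforth : ∀ k, 1 ≤ k → Forth Z T H H' w w' k ∧ Forth (fun a b => Z b a) T H' H w' w k)
    (hg : ∀ f f', IsEmb T H w f → IsEmb T H' w' f' → (∀ u, Z (f u) (f' u)) → g f = g' f') :
    (embFinset T H w).val.map g = (embFinset T H' w').val.map g' := by
  apply le_antisymm
  · exact map_le_of_forth T H H' Z w w' g g' (fun k hk => (hforth k hk).1) hg
  · exact map_le_of_forth T H' H (fun a b => Z b a) w' w g' g (fun k hk => (hforth k hk).2)
      (fun f' f h1 h2 h3 => (hg f f' h2 h1 h3).symm)

lemma bisim_feat_eq {a : ℕ} {𝒯 : Finset Template} {d nAr L : ℕ} (N : TGNN 𝒯 d nAr L)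
    (G G' : LGraph (Fin a → Bool)) :
    ∀ (m : ℕ) (Z : ℕ → ℕ → Prop), IsBisimP 𝒯 (fun k => 1 ≤ k) G G' m Z →
      ∀ w w', Z w w' → N.feat (initG d G) m w = N.feat (initG d G') m w' := by
  intro m
  induction m with
  | zero =>
    intro Z hZ w w' hww'
    show (initG d G).lab w = (initG d G').lab w'
    have hlab : G.lab w = G'.lab w' := hZ w w' hww'
    show (fun i : Fin d => if h : (i : ℕ) < a then boolToReal (G.lab w ⟨i, h⟩) else 0) = _
    rw [hlab]
    rfl
  | succ m ih =>
    intro Z hZ w w' hww'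
    obtain ⟨Z', hZ', hstep⟩ := hZ
    obtain ⟨hZ'ww', hTk⟩ := hstep w w' hww'
    show N.feat (initG d G) (m+1) w = N.feat (initG d G') (m+1) w'
    simp only [TGNN.feat]
    by_cases h : m < L
    · rw [dif_pos h, dif_pos h]
      have hfeat : N.feat (initG d G) m w = N.feat (initG d G') m w' := ih Z' hZ' w w' hZ'ww'
      rw [hfeat]
      have harg : (fun j : Fin nAr => N.agg ⟨m, h⟩ j
            (Multiset.map (fun f => N.aggT ⟨m, h⟩ j fun u => N.feat (initG d G) m (f u))
              (embFinset (N.temp ⟨m, h⟩ j) (initG d G) w).val))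
          = (fun j : Fin nAr => N.agg ⟨m, h⟩ j
            (Multiset.map (fun f => N.aggT ⟨m, h⟩ j fun u => N.feat (initG d G') m (f u))
              (embFinset (N.temp ⟨m, h⟩ j) (initG d G') w').val)) := by
        funext j
        have hT : N.temp ⟨m, h⟩ j ∈ 𝒯 := N.temp_mem ⟨m, h⟩ j
        rw [embFinset_initG, embFinset_initG]
        exact congrArg (N.agg ⟨m, h⟩ j) (map_eq_of_forths (N.temp ⟨m, h⟩ j) G G' Z' w w'
          (fun f => N.aggT ⟨m, h⟩ j fun u => N.feat (initG d G) m (f u))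
          (fun f => N.aggT ⟨m, h⟩ j fun u => N.feat (initG d G') m (f u))
          (fun k hk => hTk (N.temp ⟨m, h⟩ j) hT k hk)
          (fun f f' hf hf' hrel =>
            congrArg _ (funext fun u => ih Z' hZ' _ _ (hrel u))))
      rw [harg]
    · rw [dif_neg h, dif_neg h]
/-! ### Final assembly helpers -/

lemma feat_update_cls {𝒯 : Finset Template} {d nAr L : ℕ} (N : TGNN 𝒯 d nAr L)
    (cl : (Fin d → ℝ) → Bool) (H : LGraph (Fin d → ℝ)) (m : ℕ) :
    (TGNN.mk N.temp N.temp_mem N.aggT N.aggT_inv N.agg N.comb cl).feat H m = N.feat H m := by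
  induction m with
  | zero => rfl
  | succ m ih =>
    funext w
    simp only [TGNN.feat, ih]

lemma boolToReal_inj : Function.Injective boolToReal := by
  intro x y h
  cases x <;> cases y <;> simp [boolToReal] at h ⊢

lemma initG_lab_inj {a : ℕ} (G G' : LGraph (Fin a → Bool)) (x y : ℕ)
    (h : (initG (a+1) G).lab x = (initG (a+1) G').lab y) : G.lab x = G'.lab y := by
  funext p
  have hp : (p : ℕ) < a := p.2
  have hpd : (p : ℕ) < a + 1 := Nat.lt_succ_of_lt hp
  have h2 := congrFun h ⟨(p : ℕ), hpd⟩
  simp only [initG] at h2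
  rw [dif_pos hp, dif_pos hp] at h2
  have h3 : G.lab x ⟨(p : ℕ), hp⟩ = G'.lab y ⟨(p : ℕ), hp⟩ := boolToReal_inj h2
  have hpp : (⟨(p : ℕ), hp⟩ : Fin a) = p := Fin.ext rfl
  rwa [hpp] at h3
/-- Two finite pointed labelled graphs can be separated by some bounded
`𝒯`-GNN with Boolean classification iff they fail to be graded `l`-`𝒯`-bisimilar for
some `l`. -/

theorem gnn_separation_iff_not_bisimilar {a : ℕ} (𝒯 : Finset Template)
    (G G' : LGraph (Fin a → Bool)) (v v' : ℕ)
    (hv : v ∈ G.verts) (hv' : v' ∈ G'.verts) :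
    (∃ (d nAr L : ℕ) (N : TGNN 𝒯 d nAr L) (c : ℕ), 1 ≤ c ∧ N.IsCBounded c ∧
        N.cls (N.feat (initG d G) L v) ≠ N.cls (N.feat (initG d G') L v'))
    ↔ (∃ l : ℕ, ¬ GBisimilar 𝒯 l G v G' v') := by
  constructor
  · rintro ⟨d, nAr, L, N, c, hc, hbd, hne⟩
    refine ⟨L, fun hbis => hne ?_⟩
    obtain ⟨Z, hZ, hZvv'⟩ := hbis
    rw [bisim_feat_eq N G G' L Z hZ v v' hZvv']
  · rintro ⟨l, hl⟩
    classical
    set d := a + 1 with hddef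
    have hd : 1 ≤ d := Nat.succ_le_succ (Nat.zero_le a)
    set nAr := 𝒯.card with hnardef
    set L := l with hLdef
    -- the multiplicity bound
    set cB : ℕ := 𝒯.sup (fun T => (G.verts.sup fun w => (embFinset T G w).card)
      ⊔ (G'.verts.sup fun w => (embFinset T G' w).card)) with hcBdef
    set c := cB + 1 with hcdef
    have hcG : ∀ T ∈ 𝒯, ∀ w, (embFinset T G w).card ≤ cB := by
      intro T hT w
      by_cases hw : w ∈ G.verts
      · calc (embFinset T G w).card ≤ G.verts.sup fun w => (embFinset T G w).card :=
              Finset.le_sup (f := fun w => (embFinset T G w).card) hw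
          _ ≤ (G.verts.sup fun w => (embFinset T G w).card)
              ⊔ (G'.verts.sup fun w => (embFinset T G' w).card) := le_sup_left
          _ ≤ cB := by
              rw [hcBdef]
              exact Finset.le_sup (f := fun T => (G.verts.sup fun w => (embFinset T G w).card)
                ⊔ (G'.verts.sup fun w => (embFinset T G' w).card)) hT
      · rw [embFinset_eq_empty hw]; simp
    have hcG' : ∀ T ∈ 𝒯, ∀ w, (embFinset T G' w).card ≤ cB := by
      intro T hT w
      by_cases hw : w ∈ G'.verts
      · calc (embFinset T G' w).card ≤ G'.verts.sup fun w => (embFinset T G' w).card :=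
              Finset.le_sup (f := fun w => (embFinset T G' w).card) hw
          _ ≤ (G.verts.sup fun w => (embFinset T G w).card)
              ⊔ (G'.verts.sup fun w => (embFinset T G' w).card) := le_sup_right
          _ ≤ cB := by
              rw [hcBdef]
              exact Finset.le_sup (f := fun T => (G.verts.sup fun w => (embFinset T G w).card)
                ⊔ (G'.verts.sup fun w => (embFinset T G' w).card)) hT
      · rw [embFinset_eq_empty hw]; simp
    -- encodings
    obtain ⟨EP⟩ := exists_emb_pair nAr d hd
    obtain ⟨EA⟩ := exists_emb_real (mk_multiset_le (mk_fin_real_le d)) d hd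
    have hET : ∀ T : Template, Nonempty (Multiset (Fin (T.n+1) → Fin d → ℝ) ↪ (Fin d → ℝ)) :=
      fun T => exists_emb_mt (T.n+1) d hd
    let ET : (T : Template) → (Multiset (Fin (T.n+1) → Fin d → ℝ) ↪ (Fin d → ℝ)) :=
      fun T => (hET T).some
    -- the GNN without classification
    let N₀ : TGNN 𝒯 d nAr L :=
      { temp := fun _ j => (𝒯.equivFin.symm j).1
        temp_mem := fun _ j => (𝒯.equivFin.symm j).2
        aggT := fun l j lab => ET ((𝒯.equivFin.symm j).1) (NTmul _ lab)
        aggT_inv := by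
          intro l j σ lab₁ lab₂ h0 hp hn hlab
          exact congrArg (ET _) (NTmul_inv (mem_AutT.mpr ⟨h0, hp, hn⟩) lab₁ lab₂ hlab)
        agg := fun _ _ m => EA (mcap c m)
        comb := fun _ x ys => EP (x, ys)
        cls := fun _ => true }
    set β := N₀.feat (initG d G) L v with hβdef
    let N : TGNN 𝒯 d nAr L :=
      TGNN.mk N₀.temp N₀.temp_mem N₀.aggT N₀.aggT_inv N₀.agg N₀.comb
        (fun x => decide (x = β))
    have hNfeat : ∀ H m, N.feat H m = N₀.feat H m := fun H m => feat_update_cls N₀ _ H m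
    -- feature relation is a bisimulation
    have main : ∀ m, m ≤ L → IsBisimP 𝒯 (fun k => 1 ≤ k) G G' m
        (fun x y => x ∈ G.verts ∧ y ∈ G'.verts ∧
          N₀.feat (initG d G) m x = N₀.feat (initG d G') m y) := by
      intro m
      induction m with
      | zero =>
        intro _
        intro x y hxy
        exact initG_lab_inj G G' x y hxy.2.2
      | succ m ihm =>
        intro hm1
        have hmL : m < L := hm1
        refine ⟨_, ihm (Nat.le_of_lt hmL), ?_⟩
        rintro x y ⟨hx, hy, hf⟩
        simp only [TGNN.feat] at hf
        rw [dif_pos hmL, dif_pos hmL] at hf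
        have hf2 := EP.injective hf
        have hfm : N₀.feat (initG d G) m x = N₀.feat (initG d G') m y :=
          congrArg Prod.fst hf2
        have hargs := congrArg Prod.snd hf2
        refine ⟨⟨hx, hy, hfm⟩, ?_⟩
        intro T hT k hk
        set j := 𝒯.equivFin ⟨T, hT⟩ with hjdef
        have hTj : (𝒯.equivFin.symm j).1 = T :=
          congrArg Subtype.val (Equiv.symm_apply_apply _ _)
        have harg := congrFun hargs j
        simp only [N₀] at harg
        rw [hTj] at harg
        have h1 := EA.injective harg
        -- uncap: multiset equality of encoded orbit invariants
        have hMeq : Multiset.map (fun f => ET T (NTmul T fun u => N₀.feat (initG d G) m (f u)))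
              (embFinset T (initG d G) x).val
            = Multiset.map (fun f => ET T (NTmul T fun u => N₀.feat (initG d G') m (f u)))
              (embFinset T (initG d G') y).val := by
          refine mcap_eq_of_card_le h1 ?_ ?_
          · rw [Multiset.card_map]
            exact le_trans (hcG T hT x) (Nat.le_succ cB)
          · rw [Multiset.card_map]
            exact le_trans (hcG' T hT y) (Nat.le_succ cB)
        have hN : Multiset.map (fun f => NTmul T fun u => N₀.feat (initG d G) m (f u))
              (embFinset T (initG d G) x).val
            = Multiset.map (fun f => NTmul T fun u => N₀.feat (initG d G') m (f u))
              (embFinset T (initG d G') y).val := by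
          apply Multiset.map_injective (ET T).injective
          rw [Multiset.map_map, Multiset.map_map]
          exact hMeq
        have hbind : (embFinset T (initG d G) x).val.bind
              (fun f => NTmul T fun u => N₀.feat (initG d G) m (f u))
            = (embFinset T (initG d G') y).val.bind
              (fun f => NTmul T fun u => N₀.feat (initG d G') m (f u)) := by
          show (Multiset.map _ _).join = (Multiset.map _ _).join
          rw [hN]
        rw [bind_NTmul T (initG d G) x (fun z => N₀.feat (initG d G) m z),
          bind_NTmul T (initG d G') y (fun z => N₀.feat (initG d G') m z)] at hbind
        have hP : Multiset.map (fun f => patz (fun u => N₀.feat (initG d G) m (f u)))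
              (embFinset T (initG d G) x).val
            = Multiset.map (fun f => patz (fun u => N₀.feat (initG d G') m (f u)))
              (embFinset T (initG d G') y).val := by
          ext b
          have h3 := congrArg (Multiset.count b) hbind
          rw [Multiset.count_nsmul, Multiset.count_nsmul] at h3
          exact Nat.eq_of_mul_eq_mul_left (card_AutT_pos T) h3
        constructor
        · exact forth_of_patterns T G G'
            (fun z => N₀.feat (initG d G) m z) (fun z => N₀.feat (initG d G') m z)
            _ x y k (fun p q hp hq hpf => ⟨hp, hq, hpf⟩) hfm hP
        · exact forth_of_patterns T G' G
            (fun z => N₀.feat (initG d G') m z) (fun z => N₀.feat (initG d G) m z)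
            _ y x k (fun p q hp hq hpf => ⟨hq, hp, hpf.symm⟩) hfm.symm hP.symm
    -- conclude
    have hne : N₀.feat (initG d G) L v ≠ N₀.feat (initG d G') L v' := by
      intro hfe
      exact hl ⟨_, main L le_rfl, hv, hv', hfe⟩
    refine ⟨d, nAr, L, N, c, Nat.succ_le_succ (Nat.zero_le cB), ?_, ?_⟩
    · intro l j m
      exact congrArg EA (mcap_idem c m).symm
    · rw [hNfeat, hNfeat]
      show decide (N₀.feat (initG d G) L v = β) ≠ decide (N₀.feat (initG d G') L v' = β)
      rw [decide_eq_true (by rw [hβdef])]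
      intro hcontra
      have : N₀.feat (initG d G') L v' = β := of_decide_eq_true hcontra.symm
      exact hne (this.symm ▸ rfl)
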